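/- arXiv:2205.13729 — 2 statements merged into one kernel-verified Lean document; each statement's English description precedes it below -/
import Mathlib

section
/- Let X be a topological space and n ≥ 1. Let λ_1,…,λ_n : X → ℂ and λ̃_1,…,λ̃_n : X → ℂ be continuous functions such that for every x ∈ X the values λ_1(x),…,λ_n(x) are pairwise distinct and the values λ̃_1(x),…,λ̃_n(x) are pairwise distinct. Let S be the set of continuous maps A : X → M(n,ℂ) such that A(x) is normal and det(t·I − A(x)) = ∏_{i=1}^n (t − λ_i(x)) for all x, and let S̃ be the analogous set with λ̃_i in place of λ_i. Then there is a bijection between the quotient of S by unitary equivalence and the quotient of S̃ by unitary equivalence. -/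
open Matrix

/-- Unitary equivalence of matrices over a topological space `X`. -/
def UnitarilyEquiv {X : Type*} [TopologicalSpace X] {n : ℕ}
    (A B : X → Matrix (Fin n) (Fin n) ℂ) : Prop :=
  ∃ U : X → Matrix (Fin n) (Fin n) ℂ, Continuous U ∧ (∀ x, (U x)ᴴ * U x = 1) ∧
    ∀ x, B x = (U x)ᴴ * A x * U x

/-- The set of continuous normal matrices over `X` with characteristic polynomial
`∏ i, (t - l i x)`. -/
def NormalWithEigenvalues {X : Type*} [TopologicalSpace X] (n : ℕ)
    (l : Fin n → X → ℂ) : Set (X → Matrix (Fin n) (Fin n) ℂ) :=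
  {A | Continuous A ∧ (∀ x, A x * (A x)ᴴ = (A x)ᴴ * A x) ∧
    ∀ x, ∀ t : ℂ, (t • (1 : Matrix (Fin n) (Fin n) ℂ) - A x).det = ∏ i, (t - l i x)}

open Matrix Polynomial Finset


namespace Stmt1Aux


variable {n : ℕ}

/-- Conjugation by a unitary as an algebra homomorphism. -/
noncomputable def conjHom (U : Matrix (Fin n) (Fin n) ℂ) (hU : Uᴴ * U = 1) :
    Matrix (Fin n) (Fin n) ℂ →ₐ[ℂ] Matrix (Fin n) (Fin n) ℂ where
  toFun A := Uᴴ * A * U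
  map_one' := by show Uᴴ * 1 * U = 1; rw [mul_one, hU]
  map_mul' A B := by
    have h2 : U * Uᴴ = 1 := mul_eq_one_comm.mp hU
    calc Uᴴ * (A * B) * U = Uᴴ * A * (U * Uᴴ) * B * U := by rw [h2]; noncomm_ring
      _ = Uᴴ * A * U * (Uᴴ * B * U) := by noncomm_ring
  map_zero' := by simp
  map_add' A B := by noncomm_ring
  commutes' c := by
    simp only [Algebra.algebraMap_eq_smul_one]
    rw [mul_smul_comm, mul_one, smul_mul_assoc, hU]

theorem conjHom_apply (U : Matrix (Fin n) (Fin n) ℂ) (hU : Uᴴ * U = 1) (A) :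
    conjHom U hU A = Uᴴ * A * U := rfl

theorem aeval_conj (U A : Matrix (Fin n) (Fin n) ℂ) (hU : Uᴴ * U = 1) (p : ℂ[X]) :
    Polynomial.aeval (Uᴴ * A * U) p = Uᴴ * Polynomial.aeval A p * U := by
  have := Polynomial.aeval_algHom_apply (conjHom U hU) A p
  simpa [conjHom_apply] using this

theorem aeval_normal (A : Matrix (Fin n) (Fin n) ℂ) (hA : A * Aᴴ = Aᴴ * A) (p : ℂ[X]) :
    Polynomial.aeval A p * (Polynomial.aeval A p)ᴴ
      = (Polynomial.aeval A p)ᴴ * Polynomial.aeval A p := by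
  have hc : Commute A (star A) := by rwa [Matrix.star_eq_conjTranspose]
  have key : Commute (Polynomial.aeval A p) (star (Polynomial.aeval A p)) := by
    rw [Polynomial.aeval_eq_sum_range (x := A), star_sum]
    refine Commute.sum_left _ _ _ fun i _ => Commute.sum_right _ _ _ fun j _ => ?_
    rw [star_smul, star_pow]
    exact ((hc.pow_pow i j).smul_left _).smul_right _
  rw [← Matrix.star_eq_conjTranspose]
  exact key


theorem aeval_X_sub_C (A : Matrix (Fin n) (Fin n) ℂ) (r : ℂ) :
    Polynomial.aeval A (X - C r) = A - r • 1 := by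
  simp [map_sub, Algebra.algebraMap_eq_smul_one]

theorem det_aeval_multiset_prod (A : Matrix (Fin n) (Fin n) ℂ) (m : Multiset ℂ) :
    (Polynomial.aeval A ((m.map fun r => X - C r).prod)).det
      = (m.map fun r => (A - r • 1).det).prod := by
  induction m using Multiset.induction with
  | empty => simp
  | cons a m ih =>
      simp only [Multiset.map_cons, Multiset.prod_cons, _root_.map_mul, Matrix.det_mul,
        aeval_X_sub_C, ih]

theorem multiset_prod_finset_prod {α : Type*} (m : Multiset ℂ) (s : Finset α)
    (f : α → ℂ → ℂ) :
    (m.map fun r => ∏ i ∈ s, f i r).prod = ∏ i ∈ s, (m.map (f i)).prod := by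
  induction m using Multiset.induction with
  | empty => simp
  | cons a m ih =>
      simp only [Multiset.map_cons, Multiset.prod_cons, ih, ← Finset.prod_mul_distrib]

theorem det_aeval_char (hn : 1 ≤ n) (A : Matrix (Fin n) (Fin n) ℂ) (lam : Fin n → ℂ)
    (hchar : ∀ t : ℂ, (t • (1 : Matrix (Fin n) (Fin n) ℂ) - A).det = ∏ i, (t - lam i))
    (p : ℂ[X]) (t : ℂ) :
    (t • (1 : Matrix (Fin n) (Fin n) ℂ) - Polynomial.aeval A p).det
      = ∏ i, (t - p.eval (lam i)) := by
  have hdet1 : ∀ r : ℂ, (A - r • 1).det = ∏ i, (lam i - r) := by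
    intro r
    have h1 : A - r • 1 = -(r • (1 : Matrix (Fin n) (Fin n) ℂ) - A) := by rw [neg_sub]
    rw [h1, Matrix.det_neg, hchar r, Fintype.card_fin]
    have : ∀ i : Fin n, lam i - r = -1 * (r - lam i) := fun i => by ring
    rw [Finset.prod_congr rfl fun i _ => this i, Finset.prod_mul_distrib,
      Finset.prod_const, Finset.card_univ, Fintype.card_fin]
  set q : ℂ[X] := C t - p with hqdef
  have hq : Polynomial.aeval A q = t • (1 : Matrix (Fin n) (Fin n) ℂ) - Polynomial.aeval A p := by
    simp [hqdef, map_sub, Algebra.algebraMap_eq_smul_one]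
  have hqe : ∀ z : ℂ, q.eval z = t - p.eval z := fun z => by simp [hqdef]
  rw [← hq]
  have hprod : ∀ i, t - p.eval (lam i) = q.eval (lam i) := fun i => (hqe _).symm
  rw [Finset.prod_congr rfl fun i _ => hprod i]
  by_cases h0 : q = 0
  · rw [h0, map_zero]
    have hne : (Finset.univ : Finset (Fin n)).Nonempty := Finset.univ_nonempty_iff.mpr
      ⟨⟨0, hn⟩⟩
    haveI := Fin.pos_iff_nonempty.mp hn; rw [Matrix.det_zero]
    obtain ⟨i, hi⟩ := hne
    rw [Finset.prod_eq_zero hi (by simp [h0])]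
  · have hfac := Splits.eq_prod_roots (IsAlgClosed.splits q)
    have heval : ∀ z : ℂ, q.eval z = q.leadingCoeff * (q.roots.map fun r => z - r).prod := by
      intro z
      conv_lhs => rw [hfac]
      rw [eval_mul, eval_C, eval_multiset_prod, Multiset.map_map]
      simp [Function.comp]
    conv_lhs => rw [hfac]
    rw [_root_.map_mul, aeval_C, Algebra.algebraMap_eq_smul_one, smul_mul_assoc, one_mul,
      Matrix.det_smul, Fintype.card_fin, det_aeval_multiset_prod]
    have : (q.roots.map fun r => (A - r • 1).det) = q.roots.map fun r => ∏ i, (lam i - r) := by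
      exact Multiset.map_congr rfl fun r _ => hdet1 r
    rw [this, multiset_prod_finset_prod]
    simp only [heval]
    rw [Finset.prod_mul_distrib, Finset.prod_const, Finset.card_univ, Fintype.card_fin]


theorem charpoly_eval (A : Matrix (Fin n) (Fin n) ℂ) (t : ℂ) :
    A.charpoly.eval t = (t • (1 : Matrix (Fin n) (Fin n) ℂ) - A).det := by
  rw [Matrix.charpoly, ← Polynomial.coe_evalRingHom, RingHom.map_det]
  congr 1
  ext i j
  by_cases h : i = j
  · subst h
    simp [Matrix.charmatrix_apply_eq, Matrix.sub_apply, Matrix.smul_apply, Matrix.one_apply]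
  · simp [Matrix.charmatrix_apply_ne _ _ _ h, Matrix.sub_apply, Matrix.smul_apply,
      Matrix.one_apply, h]

theorem aeval_eq_zero_of_eval_eq_zero (A : Matrix (Fin n) (Fin n) ℂ)
    (lam : Fin n → ℂ) (hinj : Function.Injective lam)
    (hchar : ∀ t : ℂ, (t • (1 : Matrix (Fin n) (Fin n) ℂ) - A).det = ∏ i, (t - lam i))
    (g : ℂ[X]) (hg : ∀ i, g.eval (lam i) = 0) : Polynomial.aeval A g = 0 := by
  set m0 : ℂ[X] := ∏ i, (X - C (lam i)) with hm0
  have hcp : A.charpoly = m0 := by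
    apply Polynomial.funext
    intro t
    rw [charpoly_eval, hchar, hm0, Polynomial.eval_prod]
    simp
  have hm0A : Polynomial.aeval A m0 = 0 := by
    rw [← hcp]; exact Matrix.aeval_self_charpoly A
  have hdvd : m0 ∣ g := by
    by_cases hg0 : g = 0
    · simp [hg0]
    have hle : (Finset.univ.val.map lam) ≤ g.roots := by
      rw [Multiset.le_iff_count]
      intro a
      by_cases ha : a ∈ Finset.univ.val.map lam
      · obtain ⟨i, _, rfl⟩ := Multiset.mem_map.mp ha
        have h1 : (Finset.univ.val.map lam).count (lam i) = 1 := by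
          rw [Multiset.count_map_eq_count' _ _ hinj]
          exact Multiset.count_eq_one_of_mem Finset.univ.nodup (Finset.mem_univ i)
        rw [h1]
        exact Multiset.one_le_count_iff_mem.mpr (Polynomial.mem_roots'.mpr ⟨hg0, hg i⟩)
      · rw [Multiset.count_eq_zero_of_notMem ha]
        exact Nat.zero_le _
    have h2 : m0 = ((Finset.univ.val.map lam).map fun r => X - C r).prod := by
      rw [hm0, Finset.prod_eq_multiset_prod, Multiset.map_map]
      rfl
    rw [h2]
    exact (Multiset.prod_dvd_prod_of_le (Multiset.map_le_map hle)).trans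
      g.prod_multiset_X_sub_C_dvd
  obtain ⟨h, rfl⟩ := hdvd
  rw [_root_.map_mul, hm0A, zero_mul]


theorem continuous_aeval_prod_basisDivisor {X : Type*} [TopologicalSpace X]
    (A : X → Matrix (Fin n) (Fin n) ℂ) (hA : Continuous A)
    (u : X → ℂ) (hu : Continuous u) (w : Fin n → X → ℂ) (hw : ∀ j, Continuous (w j))
    (s : Finset (Fin n)) (hne : ∀ x, ∀ j ∈ s, u x ≠ w j x) :
    Continuous fun x =>
      Polynomial.aeval (A x) (∏ j ∈ s, Lagrange.basisDivisor (u x) (w j x)) := by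
  classical
  induction s using Finset.induction with
  | empty => simpa using continuous_const
  | @insert a s ha ih =>
      have hrw : (fun x =>
            Polynomial.aeval (A x) (∏ j ∈ insert a s, Lagrange.basisDivisor (u x) (w j x)))
          = fun x => ((u x - w a x)⁻¹ • (A x - w a x • 1)) *
              Polynomial.aeval (A x) (∏ j ∈ s, Lagrange.basisDivisor (u x) (w j x)) := by
        funext x
        rw [Finset.prod_insert ha, _root_.map_mul]
        congr 1
        simp [Lagrange.basisDivisor, _root_.map_mul, map_sub,
          Algebra.algebraMap_eq_smul_one, smul_mul_assoc]
      rw [hrw]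
      refine Continuous.matrix_mul ?_ (ih fun x j hj => hne x j (Finset.mem_insert_of_mem hj))
      refine Continuous.smul
        ((hu.sub (hw a)).inv₀ fun x => sub_ne_zero_of_ne (hne x a (Finset.mem_insert_self a s)))
        ?_
      exact hA.sub ((hw a).smul continuous_const)


/-- Polynomial functional calculus replacing eigenvalues `l` by `l'`. -/
noncomputable def Fmap {X : Type*} [TopologicalSpace X] (l l' : Fin n → X → ℂ)
    (A : X → Matrix (Fin n) (Fin n) ℂ) : X → Matrix (Fin n) (Fin n) ℂ := fun x =>
  Polynomial.aeval (A x)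
    (Lagrange.interpolate Finset.univ (fun i => l i x) (fun i => l' i x))

theorem Fmap_mem {X : Type*} [TopologicalSpace X] (hn : 1 ≤ n) (l l' : Fin n → X → ℂ)
    (hl : ∀ i, Continuous (l i)) (hl' : ∀ i, Continuous (l' i))
    (hdist : ∀ x, ∀ i j : Fin n, i ≠ j → l i x ≠ l j x)
    (A : X → Matrix (Fin n) (Fin n) ℂ) (hA : A ∈ NormalWithEigenvalues n l) :
    Fmap l l' A ∈ NormalWithEigenvalues n l' := by
  obtain ⟨hAc, hAn, hAchar⟩ := hA
  have hinj : ∀ x, Set.InjOn (fun i => l i x) ((Finset.univ : Finset (Fin n)) : Set (Fin n)) := by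
    intro x i _ j _ hij
    by_contra h
    exact hdist x i j h hij
  refine ⟨?_, fun x => aeval_normal _ (hAn x) _, fun x t => ?_⟩
  · have hrw : Fmap l l' A = fun x => ∑ i, l' i x •
        Polynomial.aeval (A x)
          (∏ j ∈ Finset.univ.erase i, Lagrange.basisDivisor (l i x) (l j x)) := by
      funext x
      simp only [Fmap]
      rw [Lagrange.interpolate_apply, map_sum]
      refine Finset.sum_congr rfl fun i _ => ?_
      rw [Lagrange.basis, _root_.map_mul, aeval_C, Algebra.algebraMap_eq_smul_one,
        smul_mul_assoc, one_mul]
    rw [hrw]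
    refine continuous_finset_sum _ fun i _ => Continuous.smul (hl' i) ?_
    exact continuous_aeval_prod_basisDivisor A hAc (l i) (hl i) l hl _
      (fun x j hj => hdist x i j (Finset.ne_of_mem_erase hj).symm)
  · simp only [Fmap]
    rw [det_aeval_char hn (A x) (fun i => l i x) (hAchar x)]
    refine Finset.prod_congr rfl fun i _ => ?_
    rw [Lagrange.eval_interpolate_at_node _ (hinj x) (Finset.mem_univ i)]

theorem Fmap_Fmap {X : Type*} [TopologicalSpace X] (l l' : Fin n → X → ℂ)
    (hdist : ∀ x, ∀ i j : Fin n, i ≠ j → l i x ≠ l j x)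
    (hdist' : ∀ x, ∀ i j : Fin n, i ≠ j → l' i x ≠ l' j x)
    (A : X → Matrix (Fin n) (Fin n) ℂ) (hA : A ∈ NormalWithEigenvalues n l) :
    Fmap l' l (Fmap l l' A) = A := by
  obtain ⟨hAc, hAn, hAchar⟩ := hA
  funext x
  have hinj : Function.Injective fun i => l i x := fun i j h => by
    by_contra hij; exact hdist x i j hij h
  have hinjOn : Set.InjOn (fun i => l i x) ((Finset.univ : Finset (Fin n)) : Set (Fin n)) :=
    fun i _ j _ h => hinj h
  have hinjOn' : Set.InjOn (fun i => l' i x) ((Finset.univ : Finset (Fin n)) : Set (Fin n)) := by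
    intro i _ j _ h
    by_contra hij
    exact hdist' x i j hij h
  set p : ℂ[X] := Lagrange.interpolate Finset.univ (fun i => l i x) (fun i => l' i x) with hp
  set p' : ℂ[X] := Lagrange.interpolate Finset.univ (fun i => l' i x) (fun i => l i x) with hp'
  have key : Polynomial.aeval (A x) (p'.comp p - Polynomial.X) = 0 := by
    apply aeval_eq_zero_of_eval_eq_zero (A x) (fun i => l i x) hinj (hAchar x)
    intro i
    rw [eval_sub, eval_comp, eval_X, hp,
      Lagrange.eval_interpolate_at_node _ hinjOn (Finset.mem_univ i), hp',
      Lagrange.eval_interpolate_at_node _ hinjOn' (Finset.mem_univ i), sub_self]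
  rw [map_sub, Polynomial.aeval_comp, aeval_X, sub_eq_zero] at key
  show Polynomial.aeval (Polynomial.aeval (A x) p) p' = A x
  exact key

theorem Fmap_unitarilyEquiv {X : Type*} [TopologicalSpace X] (l l' : Fin n → X → ℂ)
    {A B : X → Matrix (Fin n) (Fin n) ℂ} (h : UnitarilyEquiv A B) :
    UnitarilyEquiv (Fmap l l' A) (Fmap l l' B) := by
  obtain ⟨U, hUc, hU, hUAB⟩ := h
  refine ⟨U, hUc, hU, fun x => ?_⟩
  simp only [Fmap]
  rw [hUAB x, aeval_conj _ _ (hU x)]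

end Stmt1Aux

/-- The number of unitary equivalence classes of normal matrices over `X` with a given
multiplicity-free split characteristic polynomial does not depend on the polynomial. -/
theorem stmt_1 {X : Type*} [TopologicalSpace X] (n : ℕ) (hn : 1 ≤ n)
    (l l' : Fin n → X → ℂ)
    (hl : ∀ i, Continuous (l i)) (hl' : ∀ i, Continuous (l' i))
    (hdist : ∀ x, ∀ i j : Fin n, i ≠ j → l i x ≠ l j x)
    (hdist' : ∀ x, ∀ i j : Fin n, i ≠ j → l' i x ≠ l' j x) :
    Nonempty
      ((Quot fun (A B : NormalWithEigenvalues n l) => UnitarilyEquiv A.1 B.1) ≃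
       (Quot fun (A B : NormalWithEigenvalues n l') => UnitarilyEquiv A.1 B.1)) := by
  classical
  let F : NormalWithEigenvalues n l → NormalWithEigenvalues n l' := fun A =>
    ⟨Stmt1Aux.Fmap l l' A.1, Stmt1Aux.Fmap_mem hn l l' hl hl' hdist A.1 A.2⟩
  let G : NormalWithEigenvalues n l' → NormalWithEigenvalues n l := fun A =>
    ⟨Stmt1Aux.Fmap l' l A.1, Stmt1Aux.Fmap_mem hn l' l hl' hl hdist' A.1 A.2⟩
  refine ⟨⟨Quot.map F (fun A B h => Stmt1Aux.Fmap_unitarilyEquiv l l' h),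
    Quot.map G (fun A B h => Stmt1Aux.Fmap_unitarilyEquiv l' l h), ?_, ?_⟩⟩
  · intro q
    induction q using Quot.ind with
    | mk A =>
      exact congrArg (Quot.mk _)
        (Subtype.ext (Stmt1Aux.Fmap_Fmap l l' hdist hdist' A.1 A.2))
  · intro q
    induction q using Quot.ind with
    | mk A =>
      exact congrArg (Quot.mk _)
        (Subtype.ext (Stmt1Aux.Fmap_Fmap l' l hdist' hdist A.1 A.2))
end

section
/- Let X be a topological space and n ≥ 1. Let E_1,…,E_n : X → M(n,ℂ) be continuous maps such that for every x ∈ X: E_i(x)² = E_i(x), E_i(x)E_j(x) = 0 for i ≠ j, ∑_{i=1}^n E_i(x) = I, and E_i(x) has rank 1 (so the ranges of the E_i(x) give a decomposition of ℂⁿ into n complex lines). Then there exist continuous maps Q_1,…,Q_n : X → M(n,ℂ) such that for every x ∈ X: Q_i(x)² = Q_i(x), Q_i(x)* = Q_i(x), Q_i(x)Q_j(x) = 0 for i ≠ j, ∑_{i=1}^n Q_i(x) = I, each Q_i(x) has rank 1, and for every k with 1 ≤ k ≤ n the range of Q_1(x) + ⋯ + Q_k(x) equals the range of E_1(x) + ⋯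 + E_k(x). -/
open Matrix

namespace GS12

variable {m : Type*} [Fintype m] [DecidableEq m]

noncomputable def Dmat (A : Matrix m m ℂ) : Matrix m m ℂ :=
  1 + (A - Aᴴ) * (A - Aᴴ)ᴴ

noncomputable def proj (A : Matrix m m ℂ) : Matrix m m ℂ :=
  A * Aᴴ * (Dmat A)⁻¹

open ComplexOrder in
lemma Dmat_posDef (A : Matrix m m ℂ) : (Dmat A).PosDef :=
  Matrix.PosDef.one.add_posSemidef (Matrix.posSemidef_self_mul_conjTranspose _)

open ComplexOrder in
lemma Dmat_det_isUnit (A : Matrix m m ℂ) : IsUnit (Dmat A).det :=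
  isUnit_iff_ne_zero.2 (Dmat_posDef A).det_pos.ne'

lemma Dmat_herm (A : Matrix m m ℂ) : (Dmat A)ᴴ = Dmat A := by
  simp [Dmat, conjTranspose_add, conjTranspose_mul]

lemma proj_continuous : Continuous (proj : Matrix m m ℂ → Matrix m m ℂ) := by
  have hD : Continuous (fun A : Matrix m m ℂ => Dmat A) := by
    unfold Dmat
    exact continuous_const.add
      ((continuous_id.sub continuous_id.matrix_conjTranspose).matrix_mul
        (continuous_id.sub continuous_id.matrix_conjTranspose).matrix_conjTranspose)
  have hinv : Continuous (fun A : Matrix m m ℂ => (Dmat A)⁻¹) := by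
    have h : (fun A : Matrix m m ℂ => (Dmat A)⁻¹)
        = fun A => ((Dmat A).det)⁻¹ • (Dmat A).adjugate := by
      funext A
      rw [Matrix.inv_def, Ring.inverse_eq_inv]
    rw [h]
    exact (hD.matrix_det.inv₀ fun A => (Dmat_det_isUnit A).ne_zero).smul hD.matrix_adjugate
  exact (continuous_id.matrix_mul continuous_id.matrix_conjTranspose).matrix_mul hinv

lemma cancel_D (e : Matrix m m ℂ) : ∀ B : Matrix m m ℂ, B * Dmat e * (Dmat e)⁻¹ = B := fun B => by
  rw [Matrix.mul_assoc, Matrix.mul_nonsing_inv _ (Dmat_det_isUnit e), Matrix.mul_one]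

section idem

variable {e : Matrix m m ℂ} (he : e * e = e)

include he

lemma mul_Dmat : e * Dmat e = e * eᴴ * e := by
  have he' : eᴴ * eᴴ = eᴴ := by rw [← conjTranspose_mul, he]
  have h1 : ∀ X : Matrix m m ℂ, e * (e * X) = e * X := fun X => by
    rw [← Matrix.mul_assoc, he]
  have h2 : ∀ X : Matrix m m ℂ, eᴴ * (eᴴ * X) = eᴴ * X := fun X => by
    rw [← Matrix.mul_assoc, he']
  simp only [Dmat, conjTranspose_sub, conjTranspose_conjTranspose, mul_add, add_mul, mul_sub,
    sub_mul, Matrix.mul_one, Matrix.one_mul, Matrix.mul_assoc, he, he', h1, h2]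
  abel

lemma Dmat_mul : Dmat e * e = e * eᴴ * e := by
  have he' : eᴴ * eᴴ = eᴴ := by rw [← conjTranspose_mul, he]
  have h1 : ∀ X : Matrix m m ℂ, e * (e * X) = e * X := fun X => by
    rw [← Matrix.mul_assoc, he]
  have h2 : ∀ X : Matrix m m ℂ, eᴴ * (eᴴ * X) = eᴴ * X := fun X => by
    rw [← Matrix.mul_assoc, he']
  simp only [Dmat, conjTranspose_sub, conjTranspose_conjTranspose, mul_add, add_mul, mul_sub,
    sub_mul, Matrix.mul_one, Matrix.one_mul, Matrix.mul_assoc, he, he', h1, h2]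
  abel

lemma DmatH_mul : Dmat e * eᴴ = eᴴ * Dmat e := by
  have h := congrArg conjTranspose (mul_Dmat he)
  have h' := congrArg conjTranspose (Dmat_mul he)
  simp only [conjTranspose_mul, Dmat_herm, conjTranspose_conjTranspose] at h h'
  -- h : Dmat e * eᴴ = eᴴ * (eᴴᴴ...) ; just combine
  rw [h, ← h']

lemma De_comm : e * Dmat e = Dmat e * e := by rw [mul_Dmat he, Dmat_mul he]

lemma inv_comm : e * (Dmat e)⁻¹ = (Dmat e)⁻¹ * e := by
  have hd := Dmat_det_isUnit e
  calc e * (Dmat e)⁻¹ = (Dmat e)⁻¹ * Dmat e * e * (Dmat e)⁻¹ := by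
        rw [Matrix.nonsing_inv_mul _ hd, Matrix.one_mul]
    _ = (Dmat e)⁻¹ * (Dmat e * e) * (Dmat e)⁻¹ := by rw [Matrix.mul_assoc ((Dmat e)⁻¹)]
    _ = (Dmat e)⁻¹ * (e * Dmat e) * (Dmat e)⁻¹ := by rw [← De_comm he]
    _ = (Dmat e)⁻¹ * e * (Dmat e * (Dmat e)⁻¹) := by
        rw [← Matrix.mul_assoc, Matrix.mul_assoc ((Dmat e)⁻¹ * e)]
    _ = (Dmat e)⁻¹ * e := by rw [Matrix.mul_nonsing_inv _ hd, Matrix.mul_one]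

lemma invH_comm : eᴴ * (Dmat e)⁻¹ = (Dmat e)⁻¹ * eᴴ := by
  have hd := Dmat_det_isUnit e
  calc eᴴ * (Dmat e)⁻¹ = (Dmat e)⁻¹ * Dmat e * eᴴ * (Dmat e)⁻¹ := by
        rw [Matrix.nonsing_inv_mul _ hd, Matrix.one_mul]
    _ = (Dmat e)⁻¹ * (Dmat e * eᴴ) * (Dmat e)⁻¹ := by rw [Matrix.mul_assoc ((Dmat e)⁻¹)]
    _ = (Dmat e)⁻¹ * (eᴴ * Dmat e) * (Dmat e)⁻¹ := by rw [DmatH_mul he]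
    _ = (Dmat e)⁻¹ * eᴴ * (Dmat e * (Dmat e)⁻¹) := by
        rw [← Matrix.mul_assoc, Matrix.mul_assoc ((Dmat e)⁻¹ * eᴴ)]
    _ = (Dmat e)⁻¹ * eᴴ := by rw [Matrix.mul_nonsing_inv _ hd, Matrix.mul_one]

lemma swap_e : ∀ B : Matrix m m ℂ, B * (Dmat e)⁻¹ * e = B * e * (Dmat e)⁻¹ := fun B => by
  rw [Matrix.mul_assoc, ← inv_comm he, ← Matrix.mul_assoc]

lemma swap_eH : ∀ B : Matrix m m ℂ, B * (Dmat e)⁻¹ * eᴴ = B * eᴴ * (Dmat e)⁻¹ := fun B => by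
  rw [Matrix.mul_assoc, ← invH_comm he, ← Matrix.mul_assoc]

lemma proj_mul_self : proj e * e = e := by
  show e * eᴴ * (Dmat e)⁻¹ * e = e
  rw [swap_e he, ← mul_Dmat he, cancel_D e]

lemma proj_herm : (proj e)ᴴ = proj e := by
  show (e * eᴴ * (Dmat e)⁻¹)ᴴ = e * eᴴ * (Dmat e)⁻¹
  rw [conjTranspose_mul, conjTranspose_mul, Matrix.conjTranspose_nonsing_inv, Dmat_herm,
    conjTranspose_conjTranspose, ← Matrix.mul_assoc, ← inv_comm he, swap_eH he]

lemma proj_idem : proj e * proj e = proj e := by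
  show e * eᴴ * (Dmat e)⁻¹ * (e * eᴴ * (Dmat e)⁻¹) = proj e
  have expand : e * eᴴ * (Dmat e)⁻¹ * (e * eᴴ * (Dmat e)⁻¹)
      = e * eᴴ * (Dmat e)⁻¹ * e * eᴴ * (Dmat e)⁻¹ := by
    simp only [Matrix.mul_assoc]
  rw [expand, swap_e he, ← mul_Dmat he, cancel_D e]
  rfl

lemma range_proj :
    LinearMap.range (proj e).mulVecLin = LinearMap.range e.mulVecLin := by
  apply le_antisymm
  · have h : proj e = e * (eᴴ * (Dmat e)⁻¹) := by simp [proj, Matrix.mul_assoc]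
    rw [h, mulVecLin_mul]
    exact LinearMap.range_comp_le_range _ _
  · conv_lhs => rw [← proj_mul_self he]
    rw [mulVecLin_mul]
    exact LinearMap.range_comp_le_range _ _

lemma rank_proj : (proj e).rank = e.rank := by
  rw [Matrix.rank, Matrix.rank, range_proj he]

end idem

omit [DecidableEq m] in
lemma rank_add_of_orth (e f : Matrix m m ℂ) (he : e * e = e) (hf : f * f = f)
    (hef : e * f = 0) (hfe : f * e = 0) : (e + f).rank = e.rank + f.rank := by
  have hrange : LinearMap.range (e + f).mulVecLin
      = LinearMap.range e.mulVecLin ⊔ LinearMap.range f.mulVecLin := by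
    apply le_antisymm
    · rintro v ⟨w, rfl⟩
      rw [mulVecLin_add]
      exact Submodule.add_mem_sup (LinearMap.mem_range_self _ w) (LinearMap.mem_range_self _ w)
    · apply sup_le
      · have h : e = (e + f) * e := by rw [add_mul, he, hfe, add_zero]
        conv_lhs => rw [h]
        rw [mulVecLin_mul]
        exact LinearMap.range_comp_le_range _ _
      · have h : f = (e + f) * f := by rw [add_mul, hf, hef, zero_add]
        conv_lhs => rw [h]
        rw [mulVecLin_mul]
        exact LinearMap.range_comp_le_range _ _
  have hdisj : LinearMap.range e.mulVecLin ⊓ LinearMap.range f.mulVecLin = ⊥ := by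
    rw [eq_bot_iff]
    rintro v hv
    obtain ⟨⟨w, hw⟩, ⟨u, hu⟩⟩ := Submodule.mem_inf.1 hv
    have h1 : e.mulVecLin v = v := by
      rw [← hw, ← LinearMap.comp_apply, ← mulVecLin_mul, he]
    have h2 : e.mulVecLin v = 0 := by
      rw [← hu, ← LinearMap.comp_apply, ← mulVecLin_mul, hef, mulVecLin_zero,
        LinearMap.zero_apply]
    rw [Submodule.mem_bot, ← h1, h2]
  rw [Matrix.rank, Matrix.rank, Matrix.rank, hrange]
  have h := Submodule.finrank_sup_add_finrank_inf_eq
    (LinearMap.range e.mulVecLin) (LinearMap.range f.mulVecLin)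
  rw [hdisj] at h
  simpa using h




section sums

variable {m : Type*} [Fintype m] {ι : Type*} (A : ι → Matrix m m ℂ)
  (hA : ∀ i, A i * A i = A i) (horth : ∀ i j, i ≠ j → A i * A j = 0)

include horth in
include hA in
lemma sum_mul_sum_of_subset (S T : Finset ι) (hST : S ⊆ T) :
    (∑ i ∈ T, A i) * (∑ j ∈ S, A j) = ∑ j ∈ S, A j := by
  rw [Finset.sum_mul_sum]
  rw [Finset.sum_comm]
  refine Finset.sum_congr rfl fun j hj => ?_
  rw [Finset.sum_eq_single j (fun i _ hij => horth i j hij)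
    (fun hj' => absurd (hST hj) hj')]
  exact hA j

include horth in
include hA in
lemma sum_mul_sum_of_subset' (S T : Finset ι) (hST : S ⊆ T) :
    (∑ i ∈ S, A i) * (∑ j ∈ T, A j) = ∑ i ∈ S, A i := by
  rw [Finset.sum_mul_sum]
  refine Finset.sum_congr rfl fun i hi => ?_
  rw [Finset.sum_eq_single i (fun j _ hij => horth i j hij.symm)
    (fun hi' => absurd (hST hi) hi')]
  exact hA i

include horth in
include hA in
lemma sum_idem (S : Finset ι) :
    (∑ i ∈ S, A i) * (∑ i ∈ S, A i) = ∑ i ∈ S, A i :=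
  sum_mul_sum_of_subset A hA horth S S (subset_refl S)

include horth in
include hA in
lemma rank_sum (hrank : ∀ i, (A i).rank = 1) (S : Finset ι) :
    (∑ i ∈ S, A i).rank = S.card := by
  classical
  induction S using Finset.cons_induction with
  | empty => simp
  | cons a S ha ih =>
    have h1 : A a * ∑ i ∈ S, A i = 0 := by
      rw [Finset.mul_sum]
      exact Finset.sum_eq_zero fun j hj => horth a j (by rintro rfl; exact ha hj)
    have h2 : (∑ i ∈ S, A i) * A a = 0 := by
      rw [Finset.sum_mul]
      exact Finset.sum_eq_zero fun j hj => horth j a (by rintro rfl; exact ha hj)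
    rw [Finset.sum_cons,
      rank_add_of_orth _ _ (hA a) (sum_idem A hA horth S) h1 h2, hrank a, ih,
      Finset.card_cons, add_comm]

end sums

end GS12

namespace GS12

def Sset (n k : ℕ) : Finset (Fin n) := Finset.univ.filter (fun i => (i : ℕ) < k)

lemma Sset_subset (n : ℕ) {k k' : ℕ} (h : k ≤ k') : Sset n k ⊆ Sset n k' := fun i hi => by
  simp only [Sset, Finset.mem_filter, Finset.mem_univ, true_and] at hi ⊢
  omega

lemma Sset_zero (n : ℕ) : Sset n 0 = ∅ := by
  ext i; simp [Sset]

lemma Sset_top (n : ℕ) : Sset n n = Finset.univ := by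
  unfold Sset
  rw [Finset.filter_true_of_mem fun i _ => i.isLt]

lemma Sset_succ {n : ℕ} (i : Fin n) : Sset n ((i : ℕ) + 1) = Finset.Iic i := by
  ext j
  simp only [Sset, Finset.mem_filter, Finset.mem_univ, true_and, Finset.mem_Iic]
  rw [Nat.lt_succ_iff, Fin.le_def]

lemma Sset_val {n : ℕ} (i : Fin n) : Sset n (i : ℕ) = Finset.Iio i := by
  ext j
  simp only [Sset, Finset.mem_filter, Finset.mem_univ, true_and, Finset.mem_Iio]
  rw [Fin.lt_def]

variable {m : Type*} [Fintype m] [DecidableEq m]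

lemma proj_order {e e' : Matrix m m ℂ} (he : e * e = e) (he' : e' * e' = e')
    (h : e' * e = e) : proj e' * proj e = proj e ∧ proj e * proj e' = proj e := by
  have h1 : proj e' * e = e := by
    calc proj e' * e = proj e' * (e' * e) := by rw [h]
      _ = proj e' * e' * e := by rw [Matrix.mul_assoc]
      _ = e' * e := by rw [proj_mul_self he']
      _ = e := h
  have h2 : proj e' * proj e = proj e := by
    show proj e' * (e * eᴴ * (Dmat e)⁻¹) = e * eᴴ * (Dmat e)⁻¹
    rw [← Matrix.mul_assoc, ← Matrix.mul_assoc, h1]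
  refine ⟨h2, ?_⟩
  have h3 := congrArg conjTranspose h2
  rwa [conjTranspose_mul, proj_herm he, proj_herm he'] at h3

noncomputable def Fmat {X : Type*} {n : ℕ} (E : Fin n → X → Matrix (Fin n) (Fin n) ℂ)
    (k : ℕ) (x : X) : Matrix (Fin n) (Fin n) ℂ :=
  ∑ i ∈ Sset n k, E i x

noncomputable def Pfam {X : Type*} {n : ℕ} (E : Fin n → X → Matrix (Fin n) (Fin n) ℂ)
    (k : ℕ) (x : X) : Matrix (Fin n) (Fin n) ℂ :=
  proj (Fmat E k x)

end GS12

open GS12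

/-- Continuous Gram–Schmidt for splittings of the trivial bundle: given continuous idempotents
`E_1, …, E_n` with pairwise zero products, summing to `I`, and of rank one, there are continuous
rank-one *orthogonal* (self-adjoint) projections `Q_1, …, Q_n`, pairwise orthogonal and summing
to `I`, such that every partial sum `Q_1 + ⋯ + Q_k` has the same range as `E_1 + ⋯ + E_k`. -/
theorem stmt_12 {X : Type*} [TopologicalSpace X] (n : ℕ) (hn : 1 ≤ n)
    (E : Fin n → X → Matrix (Fin n) (Fin n) ℂ) (hE : ∀ i, Continuous (E i))
    (hidem : ∀ x, ∀ i, E i x * E i x = E i x)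
    (horth : ∀ x, ∀ i j, i ≠ j → E i x * E j x = 0)
    (hsum : ∀ x, (∑ i, E i x) = 1)
    (hrank : ∀ x, ∀ i, (E i x).rank = 1) :
    ∃ Q : Fin n → X → Matrix (Fin n) (Fin n) ℂ,
      (∀ i, Continuous (Q i)) ∧
      ∀ x,
        (∀ i, Q i x * Q i x = Q i x ∧ (Q i x)ᴴ = Q i x ∧ (Q i x).rank = 1) ∧
        (∀ i j, i ≠ j → Q i x * Q j x = 0) ∧
        (∑ i, Q i x) = 1 ∧
        ∀ k : Fin n,
          LinearMap.range (∑ i ∈ Finset.Iic k, Q i x).mulVecLin =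
            LinearMap.range (∑ i ∈ Finset.Iic k, E i x).mulVecLin := by
  classical
  have hFidem : ∀ k x, Fmat E k x * Fmat E k x = Fmat E k x := fun k x =>
    sum_idem _ (hidem x) (horth x) _
  have hFcont : ∀ k, Continuous (Fmat E k) := fun k => by
    unfold Fmat
    exact continuous_finset_sum _ fun i _ => hE i
  have hPcont : ∀ k, Continuous (Pfam E k) := fun k =>
    proj_continuous.comp (hFcont k)
  have hFmul : ∀ {k k' : ℕ}, k ≤ k' → ∀ x, Fmat E k' x * Fmat E k x = Fmat E k x :=
    fun {k k'} h x =>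
      sum_mul_sum_of_subset _ (hidem x) (horth x) _ _ (Sset_subset n h)
  have hF0 : ∀ x, Fmat E 0 x = 0 := fun x => by
    unfold Fmat; rw [Sset_zero]; simp
  have hFn : ∀ x, Fmat E n x = 1 := fun x => by
    unfold Fmat; rw [Sset_top]; exact hsum x
  have hP0 : ∀ x, Pfam E 0 x = 0 := fun x => by
    unfold Pfam; rw [hF0]; simp [GS12.proj]
  have hPn : ∀ x, Pfam E n x = 1 := fun x => by
    unfold Pfam; rw [hFn]; simp [GS12.proj, GS12.Dmat]
  have hPP : ∀ {k k' : ℕ}, k ≤ k' → ∀ x,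
      Pfam E k' x * Pfam E k x = Pfam E k x ∧ Pfam E k x * Pfam E k' x = Pfam E k x :=
    fun {k k'} h x => proj_order (hFidem k x) (hFidem k' x) (hFmul h x)
  have hPidem : ∀ k x, Pfam E k x * Pfam E k x = Pfam E k x := fun k x =>
    proj_idem (hFidem k x)
  have hPherm : ∀ k x, (Pfam E k x)ᴴ = Pfam E k x := fun k x =>
    proj_herm (hFidem k x)
  have hrankP : ∀ k x, (Pfam E k x).rank = (Sset n k).card := fun k x => by
    rw [Pfam, rank_proj (hFidem k x)]
    exact rank_sum _ (hidem x) (horth x) (hrank x) _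
  refine ⟨fun i x => Pfam E ((i : ℕ) + 1) x - Pfam E (i : ℕ) x,
    fun i => (hPcont _).sub (hPcont _), fun x => ⟨?_, ?_, ?_, ?_⟩⟩
  · intro i
    have h1 := hPP (Nat.le_succ (i : ℕ)) x
    have hp := hPidem (i : ℕ) x
    have hp' := hPidem ((i : ℕ) + 1) x
    refine ⟨?_, ?_, ?_⟩
    · rw [sub_mul, mul_sub, mul_sub, hp', h1.1, h1.2, hp]
      abel
    · rw [conjTranspose_sub, hPherm, hPherm]
    · have hpq : Pfam E (i : ℕ) x * (Pfam E ((i : ℕ) + 1) x - Pfam E (i : ℕ) x) = 0 := by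
        rw [mul_sub, h1.2, hp, sub_self]
      have hqp : (Pfam E ((i : ℕ) + 1) x - Pfam E (i : ℕ) x) * Pfam E (i : ℕ) x = 0 := by
        rw [sub_mul, h1.1, hp, sub_self]
      have hQidem : (Pfam E ((i : ℕ) + 1) x - Pfam E (i : ℕ) x)
          * (Pfam E ((i : ℕ) + 1) x - Pfam E (i : ℕ) x)
          = Pfam E ((i : ℕ) + 1) x - Pfam E (i : ℕ) x := by
        rw [sub_mul, mul_sub, mul_sub, hp', h1.1, h1.2, hp]
        abel
      have hadd := rank_add_of_orth (Pfam E (i : ℕ) x)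
        (Pfam E ((i : ℕ) + 1) x - Pfam E (i : ℕ) x) hp hQidem hpq hqp
      rw [show Pfam E (i : ℕ) x + (Pfam E ((i : ℕ) + 1) x - Pfam E (i : ℕ) x)
          = Pfam E ((i : ℕ) + 1) x from by abel] at hadd
      have r1 : (Pfam E (i : ℕ) x).rank = (i : ℕ) := by
        rw [hrankP, Sset_val, Fin.card_Iio]
      have r2 : (Pfam E ((i : ℕ) + 1) x).rank = (i : ℕ) + 1 := by
        rw [hrankP, Sset_succ, Fin.card_Iic]
      rw [hadd, r1] at r2
      show (Pfam E ((i : ℕ) + 1) x - Pfam E (i : ℕ) x).rank = 1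
      omega
  · intro i j hij
    have hv : (i : ℕ) ≠ (j : ℕ) := fun h => hij (Fin.val_injective h)
    rcases lt_or_gt_of_ne hv with h | h
    · rw [sub_mul, mul_sub, mul_sub,
        (hPP (show (i : ℕ) + 1 ≤ (j : ℕ) + 1 by omega) x).2,
        (hPP (show (i : ℕ) + 1 ≤ (j : ℕ) by omega) x).2,
        (hPP (show (i : ℕ) ≤ (j : ℕ) + 1 by omega) x).2,
        (hPP (show (i : ℕ) ≤ (j : ℕ) by omega) x).2]
      abel
    · rw [sub_mul, mul_sub, mul_sub,
        (hPP (show (j : ℕ) + 1 ≤ (i : ℕ) + 1 by omega) x).1,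
        (hPP (show (j : ℕ) ≤ (i : ℕ) + 1 by omega) x).1,
        (hPP (show (j : ℕ) + 1 ≤ (i : ℕ) by omega) x).1,
        (hPP (show (j : ℕ) ≤ (i : ℕ) by omega) x).1]
      abel
  · calc ∑ i : Fin n, (Pfam E ((i : ℕ) + 1) x - Pfam E (i : ℕ) x)
        = ∑ t ∈ Finset.range n, (Pfam E (t + 1) x - Pfam E t x) :=
          Fin.sum_univ_eq_sum_range (fun t => Pfam E (t + 1) x - Pfam E t x) n
      _ = Pfam E n x - Pfam E 0 x := Finset.sum_range_sub (fun t => Pfam E t x) n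
      _ = 1 := by rw [hPn, hP0, sub_zero]
  · intro k
    have hsumQ : ∑ i ∈ Finset.Iic k, (Pfam E ((i : ℕ) + 1) x - Pfam E (i : ℕ) x)
        = Pfam E ((k : ℕ) + 1) x := by
      have h1 : ∑ i ∈ Finset.Iic k, (Pfam E ((i : ℕ) + 1) x - Pfam E (i : ℕ) x)
          = ∑ t ∈ Finset.Iic (k : ℕ), (Pfam E (t + 1) x - Pfam E t x) := by
        rw [← Fin.map_valEmbedding_Iic, Finset.sum_map]
        rfl
      have h2 : Finset.Iic (k : ℕ) = Finset.range ((k : ℕ) + 1) := by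
        ext t; simp [Nat.lt_succ_iff]
      rw [h1, h2, Finset.sum_range_sub (fun t => Pfam E t x) ((k : ℕ) + 1), hP0, sub_zero]
    rw [hsumQ]
    have hF : Fmat E ((k : ℕ) + 1) x = ∑ i ∈ Finset.Iic k, E i x := by
      unfold Fmat; rw [Sset_succ]
    rw [show Pfam E ((k : ℕ) + 1) x = GS12.proj (Fmat E ((k : ℕ) + 1) x) from rfl,
      range_proj (hFidem ((k : ℕ) + 1) x), hF]
end
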